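/- Let k_α, k_β ≥ 1 be integers with k_α + k_β ≤ k, and set α = k_α/k and β = k_β/k (so α + β < 1). If 2^k ≥ (2edk)^{(6 ln 2 · (1+α−β))/(1−α−β)²}, then there exists a set M ⊆ V such that every clause of Φ contains at least k_α variables in M and at least k_β variables not in M. -/

import Mathlib

set_option maxHeartbeats 1000000

open Finset


namespace LLLwork
set_option linter.unusedSectionVars false
set_option maxHeartbeats 1000000


variable {n : Type} [Fintype n] [DecidableEq n]

/-- weight of an outcome under product Bernoulli(p) -/
def w (p : ℝ) (ω : n → Bool) : ℝ := ∏ v, (if ω v then p else 1 - p)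

/-- probability of an event -/
def Pr (p : ℝ) (E : Finset (n → Bool)) : ℝ := ∑ ω ∈ E, w p ω

variable {p : ℝ}

lemma w_nonneg (hp0 : 0 ≤ p) (hp1 : p ≤ 1) (ω : n → Bool) : 0 ≤ w p ω := by
  refine Finset.prod_nonneg fun v _ => ?_
  split <;> linarith

lemma Pr_nonneg (hp0 : 0 ≤ p) (hp1 : p ≤ 1) (E : Finset (n → Bool)) : 0 ≤ Pr p E :=
  Finset.sum_nonneg fun ω _ => w_nonneg hp0 hp1 ω

lemma Pr_mono (hp0 : 0 ≤ p) (hp1 : p ≤ 1) {E F : Finset (n → Bool)} (h : E ⊆ F) :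
    Pr p E ≤ Pr p F :=
  Finset.sum_le_sum_of_subset_of_nonneg h fun ω _ _ => w_nonneg hp0 hp1 ω

lemma Pr_diff (E F : Finset (n → Bool)) : Pr p (E \ F) = Pr p E - Pr p (E ∩ F) := by
  have := Finset.sum_inter_add_sum_sdiff E F (w p)
  unfold Pr; linarith

lemma Pr_union_le (hp0 : 0 ≤ p) (hp1 : p ≤ 1) (E F : Finset (n → Bool)) :
    Pr p (E ∪ F) ≤ Pr p E + Pr p F := by
  have h := Finset.sum_union_inter (s₁ := E) (s₂ := F) (f := w p)
  have h2 : 0 ≤ Pr p (E ∩ F) := Pr_nonneg hp0 hp1 _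
  unfold Pr at *; linarith

lemma sum_prod_g (g : n → Bool → ℝ) :
    ∑ ω : n → Bool, ∏ v, g v (ω v) = ∏ v, (g v true + g v false) := by
  have h := Finset.prod_univ_sum (fun _ : n => (Finset.univ : Finset Bool)) (fun v b => g v b)
  rw [Fintype.piFinset_univ] at h
  rw [← h]
  congr 1
  ext v
  simp [Fintype.sum_bool]

lemma Pr_univ : Pr p (Finset.univ : Finset (n → Bool)) = 1 := by
  have := sum_prod_g (n := n) (fun v b => if b then p else 1 - p)
  unfold Pr w
  rw [this]
  simp


variable {p : ℝ}
lemma Pr_inter_eq_mul (A : Finset n) (E F : Finset (n → Bool))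
    (hE : ∀ ω ω' : n → Bool, (∀ v ∈ A, ω v = ω' v) → (ω ∈ E ↔ ω' ∈ E))
    (hF : ∀ ω ω' : n → Bool, (∀ v ∉ A, ω v = ω' v) → (ω ∈ F ↔ ω' ∈ F)) :
    Pr p (E ∩ F) = Pr p E * Pr p F := by
  classical
  set e := Equiv.piEquivPiSubtypeProd (fun v : n => v ∈ A) (fun _ => Bool) with he
  set w1 : ({ v : n // v ∈ A } → Bool) → ℝ := fun f => ∏ v, (if f v then p else 1 - p) with hw1
  set w2 : ({ v : n // v ∉ A } → Bool) → ℝ := fun g => ∏ v, (if g v then p else 1 - p) with hw2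
  have hagreeA : ∀ (f : { v : n // v ∈ A } → Bool) (g g' : { v : n // v ∉ A } → Bool),
      ∀ v ∈ A, e.symm (f, g) v = e.symm (f, g') v := by
    intro f g g' v hv
    simp [he, Equiv.piEquivPiSubtypeProd_symm_apply, hv]
  have hagreeB : ∀ (f f' : { v : n // v ∈ A } → Bool) (g : { v : n // v ∉ A } → Bool),
      ∀ v ∉ A, e.symm (f, g) v = e.symm (f', g) v := by
    intro f f' g v hv
    simp [he, Equiv.piEquivPiSubtypeProd_symm_apply, hv]
  -- weight factorization
  have hwfact : ∀ (f : { v : n // v ∈ A } → Bool) (g : { v : n // v ∉ A } → Bool),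
      w p (e.symm (f, g)) = w1 f * w2 g := by
    intro f g
    unfold w
    rw [← Finset.prod_mul_prod_compl A (fun v => (if e.symm (f, g) v then p else 1 - p))]
    congr 1
    · rw [Finset.prod_subtype A (fun v => Iff.rfl)
        (fun v => (if e.symm (f, g) v then p else 1 - p))]
      refine Fintype.prod_congr _ _ fun v => ?_
      have : e.symm (f, g) v.1 = f v := by
        simp [he, Equiv.piEquivPiSubtypeProd_symm_apply, v.2]
      rw [this]
    · rw [Finset.prod_subtype Aᶜ (fun v => Finset.mem_compl)
        (fun v => (if e.symm (f, g) v then p else 1 - p))]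
      refine Fintype.prod_congr _ _ fun v => ?_
      have : e.symm (f, g) v.1 = g v := by
        simp [he, Equiv.piEquivPiSubtypeProd_symm_apply, v.2]
      rw [this]
  -- indicators
  set g0 : { v : n // v ∉ A } → Bool := fun _ => false with hg0
  set f0 : { v : n // v ∈ A } → Bool := fun _ => false with hf0
  set a : ({ v : n // v ∈ A } → Bool) → ℝ := fun f => if e.symm (f, g0) ∈ E then 1 else 0 with ha
  set b : ({ v : n // v ∉ A } → Bool) → ℝ := fun g => if e.symm (f0, g) ∈ F then 1 else 0 with hb
  have haE : ∀ f g, (if e.symm (f, g) ∈ E then (1:ℝ) else 0) = a f := by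
    intro f g
    simp only [ha, eq_iff_iff]
    congr 1
    simp only [eq_iff_iff]
    exact hE _ _ (fun v hv => hagreeA f g g0 v hv)
  have hbF : ∀ f g, (if e.symm (f, g) ∈ F then (1:ℝ) else 0) = b g := by
    intro f g
    simp only [hb, eq_iff_iff]
    congr 1
    simp only [eq_iff_iff]
    exact hF _ _ (fun v hv => hagreeB f f0 g v hv)
  -- Pr of any event as double sum
  have key : ∀ (S : Finset (n → Bool)),
      Pr p S = ∑ f : { v : n // v ∈ A } → Bool, ∑ g : { v : n // v ∉ A } → Bool,
        (if e.symm (f, g) ∈ S then (1:ℝ) else 0) * (w1 f * w2 g) := by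
    intro S
    have h1 : Pr p S = ∑ ω : n → Bool, (if ω ∈ S then (1:ℝ) else 0) * w p ω := by
      unfold Pr
      rw [Finset.sum_congr rfl (fun ω _ => rfl)]
      rw [← Finset.sum_filter_add_sum_filter_not Finset.univ (fun ω => ω ∈ S)
        (fun ω => (if ω ∈ S then (1:ℝ) else 0) * w p ω)]
      have e1 : ∑ ω ∈ Finset.univ.filter (fun ω => ω ∈ S), (if ω ∈ S then (1:ℝ) else 0) * w p ω
          = ∑ ω ∈ Finset.univ.filter (fun ω => ω ∈ S), w p ω := by
        refine Finset.sum_congr rfl fun ω hω => ?_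
        rw [Finset.mem_filter] at hω
        simp [hω.2]
      have e2 : ∑ ω ∈ Finset.univ.filter (fun ω => ¬ ω ∈ S), (if ω ∈ S then (1:ℝ) else 0) * w p ω
          = 0 := by
        refine Finset.sum_eq_zero fun ω hω => ?_
        rw [Finset.mem_filter] at hω
        simp [hω.2]
      rw [e1, e2, add_zero]
      congr 1
      simp [Finset.filter_univ_mem]
    rw [h1]
    rw [← Equiv.sum_comp e.symm (fun ω => (if ω ∈ S then (1:ℝ) else 0) * w p ω)]
    rw [Fintype.sum_prod_type]
    exact Finset.sum_congr rfl fun f _ => Finset.sum_congr rfl fun g _ => by rw [hwfact]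
  -- put it together
  have hEF : Pr p (E ∩ F) = (∑ f, a f * w1 f) * (∑ g, b g * w2 g) := by
    rw [key]
    rw [Finset.sum_mul_sum]
    refine Finset.sum_congr rfl fun f _ => Finset.sum_congr rfl fun g _ => ?_
    have : (if e.symm (f, g) ∈ E ∩ F then (1:ℝ) else 0)
        = (if e.symm (f, g) ∈ E then (1:ℝ) else 0) * (if e.symm (f, g) ∈ F then (1:ℝ) else 0) := by
      by_cases h1 : e.symm (f, g) ∈ E <;> by_cases h2 : e.symm (f, g) ∈ F <;>
        simp [Finset.mem_inter, h1, h2]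
    rw [this, haE, hbF]; ring
  have hEonly : Pr p E = (∑ f, a f * w1 f) * (∑ g, w2 g) := by
    rw [key]
    rw [Finset.sum_mul_sum]
    refine Finset.sum_congr rfl fun f _ => Finset.sum_congr rfl fun g _ => ?_
    rw [haE]; ring
  have hFonly : Pr p F = (∑ f, w1 f) * (∑ g, b g * w2 g) := by
    rw [key]
    rw [Finset.sum_mul_sum]
    refine Finset.sum_congr rfl fun f _ => Finset.sum_congr rfl fun g _ => ?_
    rw [hbF]; ring
  have hone : (∑ f, w1 f) * (∑ g, w2 g) = 1 := by
    have := key Finset.univ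
    have huniv : Pr p (Finset.univ : Finset (n → Bool)) = 1 := by
      have hs := sum_prod_g (n := n) (fun v b => if b then p else 1 - p)
      unfold Pr w
      rw [hs]; simp
    rw [huniv] at this
    rw [Finset.sum_mul_sum]
    rw [this]
    refine Finset.sum_congr rfl fun f _ => Finset.sum_congr rfl fun g _ => ?_
    simp
  calc Pr p (E ∩ F) = (∑ f, a f * w1 f) * (∑ g, b g * w2 g) * 1 := by rw [hEF, mul_one]
    _ = ((∑ f, a f * w1 f) * (∑ g, w2 g)) * ((∑ f, w1 f) * (∑ g, b g * w2 g)) := by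
        rw [← hone]; ring
    _ = Pr p E * Pr p F := by rw [hEonly, hFonly]

def X (T : Finset n) (ω : n → Bool) : ℕ := (T.filter (fun v => ω v = true)).card
lemma mgf (T : Finset n) (t : ℝ) :
    ∑ ω : n → Bool, w p ω * t ^ X T ω = (1 - p + p * t) ^ T.card := by
  have hterm : ∀ ω : n → Bool, w p ω * t ^ X T ω
      = ∏ v, ((if ω v then p else 1 - p) * (if v ∈ T then (if ω v then t else 1) else 1)) := by
    intro ω
    rw [Finset.prod_mul_distrib]
    congr 1
    rw [Finset.prod_ite_mem, Finset.univ_inter]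
    rw [← Finset.prod_filter_mul_prod_filter_not T (fun v => ω v = true)
      (fun v => if ω v then t else 1)]
    have h1 : ∏ v ∈ T.filter (fun v => ω v = true), (if ω v then t else 1)
        = ∏ v ∈ T.filter (fun v => ω v = true), t := by
      refine Finset.prod_congr rfl fun v hv => ?_
      have := (Finset.mem_filter.mp hv).2
      simp [this]
    have h2 : ∏ v ∈ T.filter (fun v => ¬ ω v = true), (if ω v then t else 1) = 1 := by
      refine Finset.prod_eq_one fun v hv => ?_
      have := (Finset.mem_filter.mp hv).2
      simp [this]
    rw [h1, h2, Finset.prod_const, mul_one, X]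
  calc ∑ ω : n → Bool, w p ω * t ^ X T ω
      = ∑ ω : n → Bool, ∏ v, ((if ω v then p else 1 - p)
          * (if v ∈ T then (if ω v then t else 1) else 1)) := by
        exact Finset.sum_congr rfl fun ω _ => hterm ω
    _ = ∏ v : n, ((p * (if v ∈ T then t else 1)) + ((1 - p) * 1)) := by
        rw [sum_prod_g (fun v b => (if b then p else 1 - p)
          * (if v ∈ T then (if b then t else 1) else 1))]
        refine Finset.prod_congr rfl fun v _ => ?_
        by_cases hvT : v ∈ T <;> simp [hvT]
    _ = ∏ v : n, (if v ∈ T then 1 - p + p * t else 1) := by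
        refine Finset.prod_congr rfl fun v _ => ?_
        by_cases hvT : v ∈ T <;> simp [hvT] <;> ring
    _ = (1 - p + p * t) ^ T.card := by
        rw [Finset.prod_ite_mem, Finset.univ_inter, Finset.prod_const]

lemma tail_le (hp0 : 0 ≤ p) (hp1 : p ≤ 1) (T : Finset n) (a : ℕ) (t : ℝ) (ht : 0 < t)
    (E : Finset (n → Bool)) (hE : ∀ ω ∈ E, t ^ a ≤ t ^ X T ω) :
    Pr p E ≤ (1 - p + p * t) ^ T.card / t ^ a := by
  rw [le_div_iff₀ (by positivity : (0:ℝ) < t ^ a)]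
  calc Pr p E * t ^ a = ∑ ω ∈ E, w p ω * t ^ a := by rw [Pr, Finset.sum_mul]
    _ ≤ ∑ ω ∈ E, w p ω * t ^ X T ω := by
        refine Finset.sum_le_sum fun ω hω => ?_
        exact mul_le_mul_of_nonneg_left (hE ω hω) (w_nonneg hp0 hp1 ω)
    _ ≤ ∑ ω : n → Bool, w p ω * t ^ X T ω := by
        refine Finset.sum_le_sum_of_subset_of_nonneg (Finset.subset_univ E) fun ω _ _ => ?_
        have := w_nonneg hp0 hp1 ω
        positivity
    _ = (1 - p + p * t) ^ T.card := mgf T t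

/-- lower-tail bound -/
lemma tail_lower (hp0 : 0 ≤ p) (hp1 : p ≤ 1) (T : Finset n) (a : ℕ) (t : ℝ)
    (ht0 : 0 < t) (ht1 : t ≤ 1) :
    Pr p (Finset.univ.filter fun ω => X T ω ≤ a) ≤ (1 - p + p * t) ^ T.card / t ^ a := by
  refine tail_le hp0 hp1 T a t ht0 _ fun ω hω => ?_
  have hXa : X T ω ≤ a := (Finset.mem_filter.mp hω).2
  exact pow_le_pow_of_le_one ht0.le ht1 hXa

/-- upper-tail bound -/
lemma tail_upper (hp0 : 0 ≤ p) (hp1 : p ≤ 1) (T : Finset n) (a : ℕ) (t : ℝ) (ht1 : 1 ≤ t) :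
    Pr p (Finset.univ.filter fun ω => a ≤ X T ω) ≤ (1 - p + p * t) ^ T.card / t ^ a := by
  refine tail_le hp0 hp1 T a t (by linarith) _ fun ω hω => ?_
  have hXa : a ≤ X T ω := (Finset.mem_filter.mp hω).2
  exact pow_le_pow_right₀ ht1 hXa



/-- log(1+x) ≥ x log 2 on [0,1] by concavity -/
lemma log_ge_mul_log_two {x : ℝ} (h0 : 0 ≤ x) (h1 : x ≤ 1) :
    x * Real.log 2 ≤ Real.log (1 + x) := by
  have hc := strictConcaveOn_log_Ioi.concaveOn
  have h := hc.2 (Set.mem_Ioi.mpr one_pos) (Set.mem_Ioi.mpr two_pos)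
    (by linarith : (0:ℝ) ≤ 1 - x) h0 (by ring)
  simp only [smul_eq_mul, Real.log_one, mul_zero, mul_one] at h
  have heq : 1 - x + x * 2 = 1 + x := by ring
  rw [heq] at h
  linarith

/-- derivative helper : the function (1+x)log(1+x) - x - x²/3 is monotone on [0,1] -/
lemma upper_anal {x : ℝ} (h0 : 0 ≤ x) (h1 : x ≤ 1) :
    x ^ 2 / 3 ≤ (1 + x) * Real.log (1 + x) - x := by
  set f : ℝ → ℝ := fun y => (1 + y) * Real.log (1 + y) - y - y ^ 2 / 3 with hf
  have hderiv : ∀ y ∈ Set.Icc (0:ℝ) 1, HasDerivAt f (Real.log (1 + y) - 2 * y / 3) y := by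
    intro y hy
    have hy1 : (0:ℝ) < 1 + y := by have := hy.1; linarith
    have h1' : HasDerivAt (fun z : ℝ => 1 + z) 1 y := by
      simpa using (hasDerivAt_id y).const_add 1
    have hlog : HasDerivAt (fun z : ℝ => Real.log (1 + z)) (1 / (1 + y)) y := by
      have := (Real.hasDerivAt_log (ne_of_gt hy1)).comp y h1'
      exact this.congr_deriv (by ring)
    have hmul : HasDerivAt (fun z : ℝ => (1 + z) * Real.log (1 + z))
        (1 * Real.log (1 + y) + (1 + y) * (1 / (1 + y))) y := h1'.mul hlog
    have hsq : HasDerivAt (fun z : ℝ => z ^ 2 / 3) (2 * y / 3) y := by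
      have := (hasDerivAt_pow 2 y).div_const 3
      simpa [mul_comm] using this
    have := (hmul.sub (hasDerivAt_id y)).sub hsq
    refine this.congr_deriv ?_
    rw [mul_one_div_cancel hy1.ne']; ring
  have hmono : MonotoneOn f (Set.Icc (0:ℝ) 1) := by
    apply monotoneOn_of_deriv_nonneg (convex_Icc 0 1)
    · -- continuity
      apply ContinuousOn.sub
      apply ContinuousOn.sub
      · apply ContinuousOn.mul
        · fun_prop
        · apply ContinuousOn.log
          · fun_prop
          · intro y hy; have := hy.1; simp at this ⊢; linarith
      · fun_prop
      · fun_prop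
    · intro y hy
      rw [interior_Icc] at hy
      exact (hderiv y (Set.mem_Icc_of_Ioo hy)).differentiableAt.differentiableWithinAt
    · intro y hy
      rw [interior_Icc] at hy
      rw [(hderiv y (Set.mem_Icc_of_Ioo hy)).deriv]
      have hlb := log_ge_mul_log_two (le_of_lt hy.1) (le_of_lt hy.2)
      have hl2 : (0.6931471803 : ℝ) < Real.log 2 := Real.log_two_gt_d9
      nlinarith [hy.1.le]
  have h := hmono  (Set.mem_Icc.mpr ⟨le_refl 0, zero_le_one⟩) (Set.mem_Icc.mpr ⟨h0, h1⟩) h0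
  have hf0 : f 0 = 0 := by simp [hf]
  rw [hf0] at h
  simp only [hf] at h
  linarith

/-- lower-tail analytic inequality : x + (1-x)log(1-x) ≥ x²/2 on [0,1) -/
lemma lower_anal {x : ℝ} (h0 : 0 ≤ x) (h1 : x < 1) :
    x ^ 2 / 2 ≤ x + (1 - x) * Real.log (1 - x) := by
  set f : ℝ → ℝ := fun y => y + (1 - y) * Real.log (1 - y) - y ^ 2 / 2 with hf
  have hderiv : ∀ y ∈ Set.Icc (0:ℝ) x, HasDerivAt f (- Real.log (1 - y) - y) y := by
    intro y hy
    have hy1 : (0:ℝ) < 1 - y := by have := hy.2; linarith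
    have h1' : HasDerivAt (fun z : ℝ => 1 - z) (-1) y := by
      simpa using (hasDerivAt_id y).const_sub 1
    have hlog : HasDerivAt (fun z : ℝ => Real.log (1 - z)) (-1 / (1 - y)) y := by
      have := (Real.hasDerivAt_log (ne_of_gt hy1)).comp y h1'
      exact this.congr_deriv (by ring)
    have hmul : HasDerivAt (fun z : ℝ => (1 - z) * Real.log (1 - z))
        ((-1) * Real.log (1 - y) + (1 - y) * (-1 / (1 - y))) y := h1'.mul hlog
    have hsq : HasDerivAt (fun z : ℝ => z ^ 2 / 2) y y := by
      have := (hasDerivAt_pow 2 y).div_const 2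
      simpa [mul_comm] using this
    have := ((hasDerivAt_id y).add hmul).sub hsq
    refine this.congr_deriv ?_
    rw [mul_div_assoc', mul_neg_one, neg_div_self hy1.ne']; ring
  have hmono : MonotoneOn f (Set.Icc (0:ℝ) x) := by
    apply monotoneOn_of_deriv_nonneg (convex_Icc 0 x)
    · apply ContinuousOn.sub
      apply ContinuousOn.add
      · fun_prop
      · apply ContinuousOn.mul
        · fun_prop
        · apply ContinuousOn.log
          · fun_prop
          · intro y hy; have := hy.2; simp at this ⊢; linarith
      · fun_prop
    · intro y hy
      rw [interior_Icc] at hy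
      exact (hderiv y (Set.mem_Icc_of_Ioo hy)).differentiableAt.differentiableWithinAt
    · intro y hy
      rw [interior_Icc] at hy
      rw [(hderiv y (Set.mem_Icc_of_Ioo hy)).deriv]
      have hy1 : (0:ℝ) < 1 - y := by have := hy.2; linarith
      have := Real.log_le_sub_one_of_pos hy1
      linarith
  have h := hmono (Set.mem_Icc.mpr ⟨le_refl 0, h0⟩) (Set.mem_Icc.mpr ⟨h0, le_refl x⟩) h0
  have hf0 : f 0 = 0 := by simp [hf]
  rw [hf0] at h
  simp only [hf] at h
  linarith


variable {n : Type} [Fintype n] [DecidableEq n] {p : ℝ}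
lemma exp_pow_form {c : ℝ} (hc : 0 < c) (m : ℕ) :
    c ^ m = Real.exp ((m : ℝ) * Real.log c) := by
  rw [Real.exp_nat_mul, Real.exp_log hc]

lemma bad_clause_bound (T : Finset n) (k kα kβ : ℕ) (hT : T.card = k)
    (ε : ℝ) (hp0 : 0 < p) (hp1 : p < 1) (hε0 : 0 < ε) (hε1 : ε < 1)
    (hlow : (kα : ℝ) = (1 - ε) * (k * p))
    (hupp : ((k - kβ : ℕ) : ℝ) = (1 + ε) * (k * p)) :
    Pr p (Finset.univ.filter fun ω => X T ω < kα ∨ k - kβ < X T ω)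
      ≤ Real.exp (-((k:ℝ) * p * ε ^ 2 / 2)) + Real.exp (-((k:ℝ) * p * ε ^ 2 / 3)) := by
  set μ : ℝ := (k:ℝ) * p with hμ
  have hμ0 : 0 ≤ μ := by positivity
  have hsub : (Finset.univ.filter fun ω : n → Bool => X T ω < kα ∨ k - kβ < X T ω)
      ⊆ (Finset.univ.filter fun ω => X T ω ≤ kα) ∪ (Finset.univ.filter fun ω => k - kβ ≤ X T ω) := by
    intro ω hω
    rw [Finset.mem_filter] at hω
    rw [Finset.mem_union, Finset.mem_filter, Finset.mem_filter]
    rcases hω.2 with h | h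
    · exact Or.inl ⟨Finset.mem_univ _, le_of_lt h⟩
    · exact Or.inr ⟨Finset.mem_univ _, le_of_lt h⟩
  have hεp : p * ε < 1 := by nlinarith
  -- lower tail
  have hlowbd : Pr p (Finset.univ.filter fun ω : n → Bool => X T ω ≤ kα)
      ≤ Real.exp (-(μ * ε ^ 2 / 2)) := by
    have h1 := tail_lower hp0.le hp1.le T kα (1 - ε) (by linarith) (by linarith)
    rw [hT] at h1
    have hb : 1 - p + p * (1 - ε) = 1 - p * ε := by ring
    rw [hb] at h1
    refine le_trans h1 ?_
    rw [div_le_iff₀ (pow_pos (by linarith : (0:ℝ) < 1 - ε) kα)]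
    have hnum : (1 - p * ε) ^ k ≤ Real.exp (-(μ * ε)) := by
      calc (1 - p * ε) ^ k ≤ Real.exp (-(p * ε)) ^ k := by
            apply pow_le_pow_left₀ (by linarith)
            have := Real.add_one_le_exp (-(p * ε)); linarith
        _ = Real.exp (-(p * ε) * k) := by rw [← Real.exp_nat_mul]; ring_nf
        _ = Real.exp (-(μ * ε)) := by rw [hμ]; ring_nf
    have hden : (1 - ε) ^ kα = Real.exp ((1 - ε) * μ * Real.log (1 - ε)) := by
      rw [exp_pow_form (by linarith : (0:ℝ) < 1 - ε) kα, hlow, hμ]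
    rw [hden, ← Real.exp_add]
    refine le_trans hnum (Real.exp_le_exp.mpr ?_)
    have hanal := lower_anal hε0.le hε1
    nlinarith [mul_le_mul_of_nonneg_left hanal hμ0]
  -- upper tail
  have huppbd : Pr p (Finset.univ.filter fun ω : n → Bool => k - kβ ≤ X T ω)
      ≤ Real.exp (-(μ * ε ^ 2 / 3)) := by
    have h1 := tail_upper hp0.le hp1.le T (k - kβ) (1 + ε) (by linarith)
    rw [hT] at h1
    have hb : 1 - p + p * (1 + ε) = 1 + p * ε := by ring
    rw [hb] at h1
    refine le_trans h1 ?_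
    rw [div_le_iff₀ (by positivity : (0:ℝ) < (1 + ε) ^ (k - kβ))]
    have hnum : (1 + p * ε) ^ k ≤ Real.exp (μ * ε) := by
      calc (1 + p * ε) ^ k ≤ Real.exp (p * ε) ^ k := by
            apply pow_le_pow_left₀ (by positivity)
            have := Real.add_one_le_exp (p * ε); linarith
        _ = Real.exp (p * ε * k) := by rw [← Real.exp_nat_mul]; ring_nf
        _ = Real.exp (μ * ε) := by rw [hμ]; ring_nf
    have hden : (1 + ε) ^ (k - kβ) = Real.exp ((1 + ε) * μ * Real.log (1 + ε)) := by
      rw [exp_pow_form (by linarith : (0:ℝ) < 1 + ε) (k - kβ), hupp, hμ]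
    rw [hden, ← Real.exp_add]
    refine le_trans hnum (Real.exp_le_exp.mpr ?_)
    have hanal := upper_anal hε0.le hε1.le
    nlinarith [mul_le_mul_of_nonneg_left hanal hμ0]
  calc Pr p (Finset.univ.filter fun ω : n → Bool => X T ω < kα ∨ k - kβ < X T ω)
      ≤ Pr p ((Finset.univ.filter fun ω : n → Bool => X T ω ≤ kα)
          ∪ (Finset.univ.filter fun ω : n → Bool => k - kβ ≤ X T ω)) :=
        Pr_mono hp0.le hp1.le hsub
    _ ≤ Pr p (Finset.univ.filter fun ω : n → Bool => X T ω ≤ kα)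
        + Pr p (Finset.univ.filter fun ω : n → Bool => k - kβ ≤ X T ω) :=
        Pr_union_le hp0.le hp1.le _ _
    _ ≤ Real.exp (-(μ * ε ^ 2 / 2)) + Real.exp (-(μ * ε ^ 2 / 3)) := by
        exact add_le_add hlowbd huppbd
    _ = Real.exp (-((k:ℝ) * p * ε ^ 2 / 2)) + Real.exp (-((k:ℝ) * p * ε ^ 2 / 3)) := by rw [hμ]

variable {ι : Type} [Fintype ι] [DecidableEq ι]

def C (p : ℝ) (B : ι → Finset (n → Bool)) (S : Finset ι) : Finset (n → Bool) :=
  Finset.univ.filter (fun ω => ∀ j ∈ S, ω ∉ B j)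

lemma C_anti (B : ι → Finset (n → Bool)) {S T : Finset ι} (h : S ⊆ T) : C p B T ⊆ C p B S := by
  intro ω hω
  rw [C, Finset.mem_filter] at *
  exact ⟨hω.1, fun j hj => hω.2 j (h hj)⟩

lemma C_insert (B : ι → Finset (n → Bool)) (j : ι) (S : Finset ι) :
    C p B (insert j S) = C p B S \ B j := by
  ext ω
  simp only [C, Finset.mem_filter, Finset.mem_sdiff, Finset.mem_insert, Finset.mem_univ, true_and]
  constructor
  · intro h
    exact ⟨fun i hi => h i (Or.inr hi), h j (Or.inl rfl)⟩
  · rintro ⟨h1, h2⟩ i (rfl | hi)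
    · exact h2
    · exact h1 i hi

lemma C_empty (B : ι → Finset (n → Bool)) : C p B (∅ : Finset ι) = Finset.univ := by
  simp [C]

section LLL

variable (hp0 : 0 ≤ p) (hp1 : p ≤ 1)
  (B : ι → Finset (n → Bool)) (vars : ι → Finset n)
  (hdet : ∀ i (ω ω' : n → Bool), (∀ v ∈ vars i, ω v = ω' v) → (ω ∈ B i ↔ ω' ∈ B i))
  (D : ℕ)
  (hnb : ∀ i, (Finset.univ.filter fun j => j ≠ i ∧ ¬ Disjoint (vars j) (vars i)).card ≤ D)
  (q : ℝ) (hq0 : 0 ≤ q) (hq : ∀ i, Pr p (B i) ≤ q)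
  (hcond : Real.exp 1 * q * (D + 1) ≤ 2 / 3)

include hp0 hp1 hdet hnb hq0 hq hcond in
lemma LLL_main : ∀ N : ℕ, ∀ S : Finset ι, S.card ≤ N → ∀ i ∉ S,
    Pr p (B i ∩ C p B S) ≤ Real.exp 1 * q * Pr p (C p B S) := by
  set x : ℝ := Real.exp 1 * q with hx
  have he1 : (1:ℝ) ≤ Real.exp 1 := by
    have := Real.add_one_le_exp 1; linarith
  have hx0 : 0 ≤ x := by positivity
  have hD1 : (1:ℝ) ≤ (D:ℝ) + 1 := by
    have := Nat.cast_nonneg (α := ℝ) D; linarith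
  have hx23 : x * ((D:ℝ) + 1) ≤ 2 / 3 := hcond
  have hx1 : x ≤ 2 / 3 := by nlinarith [mul_le_mul_of_nonneg_left hD1 hx0]
  -- the core numeric inequality : q ≤ x * (1-x)^D
  have hqx : q ≤ x * (1 - x) ^ D := by
    have h1x : (0:ℝ) < 1 - x := by linarith
    have hs : x / (1 - x) * D ≤ 1 := by
      rw [div_mul_eq_mul_div, div_le_one h1x]
      nlinarith
    have hlb : Real.exp (-(x / (1 - x))) ≤ 1 - x := by
      have h := Real.add_one_le_exp (x / (1 - x))
      have h2 : 1 / (1 - x) ≤ Real.exp (x / (1 - x)) := by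
        have heq : 1 / (1 - x) = x / (1 - x) + 1 := by field_simp; ring
        rw [heq]; exact h
      rw [Real.exp_neg]
      rw [inv_le_comm₀ (Real.exp_pos _) h1x]
      calc (1-x)⁻¹ = 1/(1-x) := by ring
        _ ≤ Real.exp (x/(1-x)) := h2
    have hpow : Real.exp (-(x / (1 - x))) ^ D ≤ (1 - x) ^ D :=
      pow_le_pow_left₀ (Real.exp_pos _).le hlb D
    have hexp : Real.exp (-(x / (1 - x))) ^ D = Real.exp (-(x / (1 - x)) * D) := by
      rw [← Real.exp_nat_mul]; ring_nf
    have hge : Real.exp (-1 : ℝ) ≤ (1 - x) ^ D := by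
      calc Real.exp (-1 : ℝ) ≤ Real.exp (-(x / (1 - x)) * D) := by
            apply Real.exp_le_exp.mpr; nlinarith
        _ = Real.exp (-(x / (1 - x))) ^ D := hexp.symm
        _ ≤ (1 - x) ^ D := hpow
    have hfin : 1 ≤ Real.exp 1 * (1 - x) ^ D := by
      have := mul_le_mul_of_nonneg_left hge (Real.exp_pos 1).le
      rw [← Real.exp_add] at this
      simpa using this
    calc q = q * 1 := by ring
      _ ≤ q * (Real.exp 1 * (1 - x) ^ D) := by
          apply mul_le_mul_of_nonneg_left hfin hq0
      _ = x * (1 - x) ^ D := by rw [hx]; ring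
  intro N
  induction N with
  | zero =>
    intro S hS i hi
    have hS0 : S = ∅ := Finset.card_eq_zero.mp (Nat.le_zero.mp hS)
    subst hS0
    rw [C_empty]
    have h1 : B i ∩ Finset.univ = B i := by simp
    rw [h1, Pr_univ, mul_one]
    calc Pr p (B i) ≤ q := hq i
      _ ≤ Real.exp 1 * q := by nlinarith
  | succ N ih =>
    intro S hS i hi
    set S1 : Finset ι := S.filter (fun j => ¬ Disjoint (vars j) (vars i)) with hS1def
    set S2 : Finset ι := S.filter (fun j => Disjoint (vars j) (vars i)) with hS2def
    have hS2sub : S2 ⊆ S := Finset.filter_subset _ _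
    have hS1sub : S1 ⊆ S := Finset.filter_subset _ _
    have hS12 : S2 ∪ S1 = S := by
      rw [hS1def, hS2def, Finset.filter_union_filter_not_eq]
    have hdisj12 : Disjoint S2 S1 := by
      rw [hS1def, hS2def]
      exact Finset.disjoint_filter_filter_not S S (fun j => Disjoint (vars j) (vars i))
    have hcard12 : S2.card + S1.card = S.card := by
      rw [← Finset.card_union_of_disjoint hdisj12, hS12]
    -- independence step
    have hindep : Pr p (B i ∩ C p B S2) = Pr p (B i) * Pr p (C p B S2) := by
      refine Pr_inter_eq_mul (vars i) _ _ (fun ω ω' hagree => hdet i ω ω' hagree) ?_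
      intro ω ω' hagree
      simp only [C, Finset.mem_filter, Finset.mem_univ, true_and]
      have hiff : ∀ j ∈ S2, (ω ∈ B j ↔ ω' ∈ B j) := by
        intro j hj
        have hdisj : Disjoint (vars j) (vars i) := (Finset.mem_filter.mp hj).2
        refine hdet j ω ω' fun v hv => ?_
        exact hagree v (fun hvi => (Finset.disjoint_left.mp hdisj hv) hvi)
      constructor
      · intro h j hj hc
        exact h j hj ((hiff j hj).mpr hc)
      · intro h j hj hc
        exact h j hj ((hiff j hj).mp hc)
    -- chain bound : Pr (C (S2 ∪ T)) ≥ (1-x)^T.card * Pr (C S2) for T ⊆ S1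
    have hchain : ∀ T : Finset ι, T ⊆ S1 →
        (1 - x) ^ T.card * Pr p (C p B S2) ≤ Pr p (C p B (S2 ∪ T)) := by
      intro T
      induction T using Finset.induction_on with
      | empty =>
        intro _
        simp
      | insert _ _ hjT =>
        rename_i j T hrec
        intro hins
        have hjS1 : j ∈ S1 := hins (Finset.mem_insert_self j T)
        have hTsub : T ⊆ S1 := fun t ht => hins (Finset.mem_insert_of_mem ht)
        have hjnotin : j ∉ S2 ∪ T := by
          intro hc
          rcases Finset.mem_union.mp hc with h | h
          · exact (Finset.disjoint_left.mp hdisj12 h) hjS1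
          · exact hjT h
        have hcardle : (S2 ∪ T).card ≤ N := by
          have h1 : (S2 ∪ T).card ≤ S2.card + T.card := Finset.card_union_le _ _
          have h2 : T.card + 1 ≤ S1.card := by
            have : T.card < S1.card := Finset.card_lt_card (Finset.ssubset_iff_of_subset hTsub
              |>.mpr ⟨j, hjS1, hjT⟩)
            omega
          omega
        have hstep := ih (S2 ∪ T) hcardle j hjnotin
        have hunion : S2 ∪ insert j T = insert j (S2 ∪ T) := by rw [Finset.union_insert]
        rw [hunion, C_insert]
        rw [Pr_diff]
        have hic : C p B (S2 ∪ T) ∩ B j = B j ∩ C p B (S2 ∪ T) := Finset.inter_comm _ _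
        rw [hic]
        have hrec' := hrec hTsub
        have hCpos : 0 ≤ Pr p (C p B (S2 ∪ T)) := Pr_nonneg hp0 hp1 _
        have hCS2pos : 0 ≤ Pr p (C p B S2) := Pr_nonneg hp0 hp1 _
        rw [Finset.card_insert_of_notMem hjT]
        have h1x : (0:ℝ) ≤ 1 - x := by linarith
        calc (1 - x) ^ (T.card + 1) * Pr p (C p B S2)
            = (1 - x) * ((1 - x) ^ T.card * Pr p (C p B S2)) := by ring
          _ ≤ (1 - x) * Pr p (C p B (S2 ∪ T)) := by
              apply mul_le_mul_of_nonneg_left hrec' h1x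
          _ = Pr p (C p B (S2 ∪ T)) - x * Pr p (C p B (S2 ∪ T)) := by ring
          _ ≤ Pr p (C p B (S2 ∪ T)) - Pr p (B j ∩ C p B (S2 ∪ T)) := by linarith [hstep]
    -- apply with T = S1
    have hCS : (1 - x) ^ S1.card * Pr p (C p B S2) ≤ Pr p (C p B S) := by
      have := hchain S1 (Finset.Subset.refl _)
      rwa [hS12] at this
    have hS1card : S1.card ≤ D := by
      refine le_trans (Finset.card_le_card ?_) (hnb i)
      intro j hj
      rw [Finset.mem_filter] at hj ⊢
      refine ⟨Finset.mem_univ _, ?_, hj.2⟩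
      intro hji; subst hji; exact hi hj.1
    have h1x : (0:ℝ) ≤ 1 - x := by linarith
    have h1x1 : 1 - x ≤ 1 := by linarith
    have hpowle : (1 - x) ^ D ≤ (1 - x) ^ S1.card :=
      pow_le_pow_of_le_one h1x h1x1 hS1card
    have hCS2pos : 0 ≤ Pr p (C p B S2) := Pr_nonneg hp0 hp1 _
    have hfinal : (1 - x) ^ D * Pr p (C p B S2) ≤ Pr p (C p B S) := by
      calc (1 - x) ^ D * Pr p (C p B S2) ≤ (1 - x) ^ S1.card * Pr p (C p B S2) := by
            apply mul_le_mul_of_nonneg_right hpowle hCS2pos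
        _ ≤ Pr p (C p B S) := hCS
    -- combine
    calc Pr p (B i ∩ C p B S)
        ≤ Pr p (B i ∩ C p B S2) := by
          apply Pr_mono hp0 hp1
          exact Finset.inter_subset_inter (Finset.Subset.refl _) (C_anti B hS2sub)
      _ = Pr p (B i) * Pr p (C p B S2) := hindep
      _ ≤ q * Pr p (C p B S2) := by
          apply mul_le_mul_of_nonneg_right (hq i) hCS2pos
      _ ≤ x * ((1 - x) ^ D * Pr p (C p B S2)) := by
          have := mul_le_mul_of_nonneg_right hqx hCS2pos
          calc q * Pr p (C p B S2) ≤ x * (1-x)^D * Pr p (C p B S2) := this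
            _ = x * ((1-x)^D * Pr p (C p B S2)) := by ring
      _ ≤ x * Pr p (C p B S) := by
          apply mul_le_mul_of_nonneg_left hfinal hx0

include hp0 hp1 hdet hnb hq0 hq hcond in
lemma LLL_exists : ∃ ω : n → Bool, ∀ i, ω ∉ B i := by
  set x : ℝ := Real.exp 1 * q with hx
  have he1 : (1:ℝ) ≤ Real.exp 1 := by have := Real.add_one_le_exp 1; linarith
  have hx0 : 0 ≤ x := by positivity
  have hD1 : (1:ℝ) ≤ (D:ℝ) + 1 := by
    have := Nat.cast_nonneg (α := ℝ) D; linarith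
  have hx1 : x ≤ 2 / 3 := by nlinarith [hcond, mul_le_mul_of_nonneg_left hD1 hx0]
  have h1x : (0:ℝ) < 1 - x := by linarith
  have hlow : ∀ T : Finset ι, (1 - x) ^ T.card ≤ Pr p (C p B T) := by
    intro T
    induction T using Finset.induction_on with
    | empty => rw [C_empty]; simp [Pr_univ]
    | insert _ _ hjT =>
      rename_i j T hrec
      rw [C_insert, Pr_diff, Finset.card_insert_of_notMem hjT]
      have hstep : Pr p (B j ∩ C p B T) ≤ x * Pr p (C p B T) :=
        LLL_main hp0 hp1 B vars hdet D hnb q hq0 hq hcond T.card T le_rfl j hjT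
      have hic : C p B T ∩ B j = B j ∩ C p B T := Finset.inter_comm _ _
      rw [hic]
      calc (1 - x) ^ (T.card + 1) = (1 - x) * (1 - x) ^ T.card := by ring
        _ ≤ (1 - x) * Pr p (C p B T) := by
            apply mul_le_mul_of_nonneg_left hrec h1x.le
        _ = Pr p (C p B T) - x * Pr p (C p B T) := by ring
        _ ≤ Pr p (C p B T) - Pr p (B j ∩ C p B T) := by linarith [hstep]
  have hpos : 0 < Pr p (C p B Finset.univ) := by
    calc (0:ℝ) < (1 - x) ^ (Finset.univ : Finset ι).card := by positivity
      _ ≤ Pr p (C p B Finset.univ) := hlow _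
  have hne : (C p B (Finset.univ : Finset ι)).Nonempty := by
    by_contra hc
    rw [Finset.not_nonempty_iff_eq_empty] at hc
    rw [C] at hpos hc
    rw [hc] at hpos
    simp [Pr] at hpos
  obtain ⟨ω, hω⟩ := hne
  rw [C, Finset.mem_filter] at hω
  exact ⟨ω, fun i => hω.2 i (Finset.mem_univ i)⟩

end LLL

end LLLwork

open LLLwork

/-- A clause over variable set `V`. -/
structure Clause (V : Type) where
  vars : Finset V
  sign : V → Bool

/-- Let `Φ` be a `k`-uniform CNF formula in which every variable appears
in at most `d` clauses.  Let `k_α, k_β ≥ 1` with `k_α + k_β ≤ k`, and set `α = k_α/k`,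
`β = k_β/k` (so `α + β < 1`).  If `2^k ≥ (2edk)^{(6 ln 2 · (1+α−β))/(1−α−β)²}`, then there
is a set `M ⊆ V` of marked variables such that every clause contains at least `k_α`
marked variables and at least `k_β` unmarked variables. -/
theorem stmt_1 {V ι : Type} [DecidableEq V] [Fintype ι]
    (cl : ι → Clause V) (k d kα kβ : ℕ)
    (hk : ∀ i, (cl i).vars.card = k)
    (hdeg : ∀ v : V, (Finset.univ.filter fun i => v ∈ (cl i).vars).card ≤ d)
    (hα : 1 ≤ kα) (hβ : 1 ≤ kβ) (hαβ : kα + kβ ≤ k)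
    (α β : ℝ) (hαdef : α = (kα : ℝ) / k) (hβdef : β = (kβ : ℝ) / k)
    (hlt : α + β < 1)
    (hcond : (2 * Real.exp 1 * d * k) ^ ((6 * Real.log 2 * (1 + α - β)) / (1 - α - β) ^ 2)
        ≤ (2 : ℝ) ^ (k : ℝ)) :
    ∃ M : Finset V, ∀ i, kα ≤ ((cl i).vars ∩ M).card ∧ kβ ≤ ((cl i).vars \ M).card := by
  classical
  rcases isEmpty_or_nonempty ι with hι | hι
  · exact ⟨∅, fun i => isEmptyElim i⟩
  obtain ⟨i0⟩ := hι
  -- basic numeric facts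
  have hk2 : 2 ≤ k := le_trans (by omega) hαβ
  have hk0 : 0 < k := by omega
  have hkR : (0:ℝ) < (k:ℝ) := by exact_mod_cast hk0
  have hd1 : 1 ≤ d := by
    have hvars : (cl i0).vars.Nonempty := by
      rw [← Finset.card_pos, hk i0]; omega
    obtain ⟨v, hv⟩ := hvars
    have hm : i0 ∈ Finset.univ.filter (fun i => v ∈ (cl i).vars) :=
      Finset.mem_filter.mpr ⟨Finset.mem_univ _, hv⟩
    have hpos := Finset.card_pos.mpr ⟨i0, hm⟩
    have := hdeg v
    omega
  have hdR : (1:ℝ) ≤ (d:ℝ) := by exact_mod_cast hd1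
  have hkαβ : kα + kβ < k := by
    have hs : ((kα:ℝ) + (kβ:ℝ)) / k < 1 := by
      rw [hαdef, hβdef, ← add_div] at hlt; exact hlt
    rw [div_lt_one hkR] at hs
    exact_mod_cast hs
  have hα0 : 0 < α := by
    rw [hαdef]
    have : (0:ℝ) < (kα:ℝ) := by exact_mod_cast hα
    positivity
  have hβ0 : 0 < β := by
    rw [hβdef]
    have : (0:ℝ) < (kβ:ℝ) := by exact_mod_cast hβ
    positivity
  set γ : ℝ := 1 - α - β with hγdef
  set δ : ℝ := 1 + α - β with hδdef
  have hγ0 : 0 < γ := by rw [hγdef]; linarith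
  have hδγ : γ < δ := by rw [hγdef, hδdef]; linarith
  have hδ0 : 0 < δ := lt_trans hγ0 hδγ
  have hβ1 : β < 1 := by linarith
  have hδ2 : δ < 2 := by rw [hδdef]; linarith
  set p : ℝ := δ / 2 with hpdef
  set ε : ℝ := γ / δ with hεdef
  have hp0 : 0 < p := by rw [hpdef]; linarith
  have hp1 : p < 1 := by rw [hpdef]; linarith
  have hε0 : 0 < ε := by rw [hεdef]; positivity
  have hε1 : ε < 1 := by rw [hεdef, div_lt_one hδ0]; exact hδγ
  -- cast identities
  have hαk : α * k = (kα:ℝ) := by rw [hαdef]; field_simp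
  have hβk : β * k = (kβ:ℝ) := by rw [hβdef]; field_simp
  have hlowid : (kα : ℝ) = (1 - ε) * ((k:ℝ) * p) := by
    rw [hεdef, hpdef]
    rw [← hαk]
    field_simp
    rw [hγdef, hδdef]
    ring
  have huppid : ((k - kβ : ℕ) : ℝ) = (1 + ε) * ((k:ℝ) * p) := by
    have hc : ((k - kβ:ℕ):ℝ) = (k:ℝ) - (kβ:ℝ) := by
      rw [Nat.cast_sub (by omega)]
    rw [hc, ← hβk]
    rw [hεdef, hpdef]
    field_simp
    rw [hγdef, hδdef]
    ring
  -- the probability space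
  set V' : Finset V := Finset.univ.biUnion (fun i => (cl i).vars) with hV'
  have hmemV' : ∀ i, ∀ v ∈ (cl i).vars, v ∈ V' := fun i v hv =>
    Finset.mem_biUnion.mpr ⟨i, Finset.mem_univ _, hv⟩
  set T : ι → Finset {v : V // v ∈ V'} := fun i => (cl i).vars.subtype (fun v => v ∈ V')
    with hTdef
  have hTmem : ∀ i (u : {v : V // v ∈ V'}), u ∈ T i ↔ u.1 ∈ (cl i).vars := by
    intro i u; rw [hTdef]; exact Finset.mem_subtype
  have hTcard : ∀ i, (T i).card = k := by
    intro i
    rw [hTdef]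
    simp only [Finset.card_subtype]
    rw [Finset.filter_true_of_mem (fun v hv => hmemV' i v hv), hk i]
  set B : ι → Finset ({v : V // v ∈ V'} → Bool) := fun i =>
    Finset.univ.filter (fun ω => X (T i) ω < kα ∨ k - kβ < X (T i) ω) with hBdef
  have hdet : ∀ i (ω ω' : {v : V // v ∈ V'} → Bool),
      (∀ v ∈ T i, ω v = ω' v) → (ω ∈ B i ↔ ω' ∈ B i) := by
    intro i ω ω' hagree
    have hX : X (T i) ω = X (T i) ω' := by
      unfold X
      congr 1
      apply Finset.filter_congr
      intro v hv; rw [hagree v hv]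
    rw [hBdef]
    simp only [Finset.mem_filter, Finset.mem_univ, true_and, hX]
  -- neighbour bound
  set D : ℕ := k * (d - 1) with hDdef
  have hnb : ∀ i, (Finset.univ.filter fun j => j ≠ i ∧ ¬ Disjoint (T j) (T i)).card ≤ D := by
    intro i
    have hsub2 : (Finset.univ.filter fun j => j ≠ i ∧ ¬ Disjoint (T j) (T i))
        ⊆ (cl i).vars.biUnion (fun v => Finset.univ.filter (fun j => j ≠ i ∧ v ∈ (cl j).vars)) := by
      intro j hj
      rw [Finset.mem_filter] at hj
      obtain ⟨hju, hji, hdisj⟩ := hj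
      rw [Finset.not_disjoint_iff] at hdisj
      obtain ⟨u, hu1, hu2⟩ := hdisj
      refine Finset.mem_biUnion.mpr ⟨u.1, (hTmem i u).mp hu2, ?_⟩
      exact Finset.mem_filter.mpr ⟨Finset.mem_univ _, hji, (hTmem j u).mp hu1⟩
    refine le_trans (Finset.card_le_card hsub2) ?_
    refine le_trans (Finset.card_biUnion_le) ?_
    rw [hDdef]
    have hper : ∀ v ∈ (cl i).vars,
        (Finset.univ.filter (fun j => j ≠ i ∧ v ∈ (cl j).vars)).card ≤ d - 1 := by
      intro v hv
      have hsub3 : Finset.univ.filter (fun j => j ≠ i ∧ v ∈ (cl j).vars)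
          ⊆ (Finset.univ.filter (fun j => v ∈ (cl j).vars)).erase i := by
        intro j hj; rw [Finset.mem_filter] at hj
        exact Finset.mem_erase.mpr ⟨hj.2.1, Finset.mem_filter.mpr ⟨Finset.mem_univ _, hj.2.2⟩⟩
      refine le_trans (Finset.card_le_card hsub3) ?_
      have hi_mem : i ∈ Finset.univ.filter (fun j => v ∈ (cl j).vars) :=
        Finset.mem_filter.mpr ⟨Finset.mem_univ _, hv⟩
      rw [Finset.card_erase_of_mem hi_mem]
      exact Nat.sub_le_sub_right (hdeg v) 1
    calc ∑ v ∈ (cl i).vars, (Finset.univ.filter (fun j => j ≠ i ∧ v ∈ (cl j).vars)).card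
        ≤ ∑ _v ∈ (cl i).vars, (d-1) := Finset.sum_le_sum hper
      _ = k * (d-1) := by rw [Finset.sum_const, hk i, smul_eq_mul]
  -- q and conditions
  set μ : ℝ := (k:ℝ) * p with hμdef
  set q : ℝ := Real.exp (-(μ * ε^2/2)) + Real.exp (-(μ * ε^2/3)) with hqdef
  have hq0 : 0 ≤ q := by positivity
  have hq : ∀ i, Pr p (B i) ≤ q := by
    intro i
    rw [hBdef, hqdef, hμdef]
    exact bad_clause_bound (T i) k kα kβ (hTcard i) ε hp0 hp1 hε0 hε1 hlowid huppid
  -- extract the log condition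
  set L : ℝ := Real.log (2 * Real.exp 1 * d * k) with hLdef
  have hbase9 : (9:ℝ) ≤ 2 * Real.exp 1 * d * k := by
    have he : (2.7:ℝ) < Real.exp 1 := by
      have := Real.exp_one_gt_d9; linarith
    have hkc : (2:ℝ) ≤ (k:ℝ) := by exact_mod_cast hk2
    have hdk : (2:ℝ) ≤ (d:ℝ) * (k:ℝ) := by nlinarith [mul_nonneg (by linarith : (0:ℝ) ≤ (d:ℝ) - 1) (by linarith : (0:ℝ) ≤ (k:ℝ) - 2)]
    have h1 : (2.7:ℝ) * 2 ≤ Real.exp 1 * ((d:ℝ)*(k:ℝ)) :=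
      mul_le_mul he.le hdk (by norm_num) (le_of_lt (Real.exp_pos 1))
    nlinarith
  have hbasepos : (0:ℝ) < 2 * Real.exp 1 * d * k := by linarith
  have hL6 : L ≤ (k:ℝ) * γ^2 / (6*δ) := by
    have h1 := Real.log_le_log (Real.rpow_pos_of_pos hbasepos _) hcond
    rw [Real.log_rpow hbasepos, Real.log_rpow two_pos] at h1
    -- h1 : 6 * log 2 * δ / γ^2 * L ≤ k * log 2
    have hl2 : (0:ℝ) < Real.log 2 := Real.log_pos (by norm_num)
    rw [le_div_iff₀ (by positivity : (0:ℝ) < 6*δ)]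
    rw [div_mul_eq_mul_div, div_le_iff₀ (by positivity : (0:ℝ) < γ^2)] at h1
    have h2 : (L * (6*δ)) * Real.log 2 ≤ ((k:ℝ) * γ^2) * Real.log 2 := by linarith
    exact le_of_mul_le_mul_right h2 hl2
  have hμε3 : μ * ε^2/3 = (k:ℝ) * γ^2 / (6*δ) := by
    rw [hμdef, hεdef, hpdef]
    field_simp
    ring
  have hexpL : Real.exp L = 2 * Real.exp 1 * d * k := Real.exp_log hbasepos
  have hq_le : q ≤ 4/3 * Real.exp (-L) := by
    have e3 : Real.exp (-(μ*ε^2/3)) ≤ Real.exp (-L) := by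
      apply Real.exp_le_exp.mpr
      have h := hL6
      rw [← hμε3] at h
      linarith
    have ehalf : Real.exp (-(L/2)) ≤ 1/3 := by
      have h9 : (3:ℝ) ≤ Real.exp (L/2) := by
        have hsq : Real.exp (L/2) * Real.exp (L/2) = Real.exp L := by
          rw [← Real.exp_add]; ring_nf
        nlinarith [Real.exp_pos (L/2), hbase9, hexpL]
      rw [Real.exp_neg, inv_le_comm₀ (Real.exp_pos _) (by norm_num : (0:ℝ) < 1/3)]
      calc (1/3 : ℝ)⁻¹ = 3 := by norm_num
        _ ≤ Real.exp (L/2) := h9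
    have e2 : Real.exp (-(μ*ε^2/2)) ≤ Real.exp (-L) * (1/3) := by
      have hsplit : -(μ*ε^2/2) = -(μ*ε^2/3) + -(μ*ε^2/6) := by ring
      rw [hsplit, Real.exp_add]
      have h6 : Real.exp (-(μ*ε^2/6)) ≤ Real.exp (-(L/2)) := by
        apply Real.exp_le_exp.mpr
        have : μ*ε^2/6 = (μ*ε^2/3)/2 := by ring
        rw [this, hμε3]
        linarith
      have := Real.exp_pos (-(μ*ε^2/3))
      calc Real.exp (-(μ*ε^2/3)) * Real.exp (-(μ*ε^2/6))
          ≤ Real.exp (-L) * Real.exp (-(L/2)) := by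
            apply mul_le_mul e3 h6 (Real.exp_pos _).le (Real.exp_pos _).le
        _ ≤ Real.exp (-L) * (1/3) := by
            apply mul_le_mul_of_nonneg_left ehalf (Real.exp_pos _).le
    rw [hqdef]
    linarith
  have hDcast : ((D:ℕ):ℝ) + 1 ≤ (k:ℝ) * d := by
    have hmul : k * (d - 1) + k = k * d := by
      have hd : d - 1 + 1 = d := by omega
      calc k*(d-1) + k = k*((d-1)+1) := by ring
        _ = k*d := by rw [hd]
    have hnat : D + 1 ≤ k * d := by omega
    have := Nat.cast_le (α := ℝ) |>.mpr hnat
    push_cast at this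
    linarith
  have hcondLLL : Real.exp 1 * q * ((D:ℝ) + 1) ≤ 2/3 := by
    have hexpnegL : Real.exp (-L) = (2 * Real.exp 1 * d * k)⁻¹ := by
      rw [Real.exp_neg, hexpL]
    have hqpos : 0 ≤ 4/3 * Real.exp (-L) := by positivity
    have hDpos : (0:ℝ) ≤ (D:ℝ) + 1 := by positivity
    calc Real.exp 1 * q * ((D:ℝ) + 1)
        ≤ Real.exp 1 * (4/3 * Real.exp (-L)) * ((k:ℝ) * d) := by
          apply mul_le_mul
          · exact mul_le_mul_of_nonneg_left hq_le (Real.exp_pos _).le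
          · exact hDcast
          · exact hDpos
          · positivity
      _ = 2/3 := by
          rw [hexpnegL]
          have hkne : (k:ℝ) ≠ 0 := ne_of_gt hkR
          have hdne : (d:ℝ) ≠ 0 := by positivity
          field_simp
          ring
  -- apply LLL
  obtain ⟨ω, hω⟩ := LLL_exists hp0.le hp1.le B T hdet D hnb q hq0 hq hcondLLL
  -- build the marked set
  set M : Finset V := (Finset.univ.filter (fun u : {v : V // v ∈ V'} => ω u = true)).map
    (Function.Embedding.subtype _) with hMdef
  refine ⟨M, fun i => ?_⟩
  have hXi : kα ≤ X (T i) ω ∧ X (T i) ω ≤ k - kβ := by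
    have := hω i
    rw [hBdef, Finset.mem_filter] at this
    push_neg at this
    have h2 := this (Finset.mem_univ _)
    exact ⟨h2.1, h2.2⟩
  have hMmem : ∀ v : V, v ∈ M ↔ ∃ h : v ∈ V', ω ⟨v, h⟩ = true := by
    intro v
    rw [hMdef]
    simp only [Finset.mem_map, Finset.mem_filter, Finset.mem_univ, true_and,
      Function.Embedding.coe_subtype]
    constructor
    · rintro ⟨u, hu, rfl⟩
      exact ⟨u.2, hu⟩
    · rintro ⟨h, hωv⟩
      exact ⟨⟨v, h⟩, hωv, rfl⟩
  have hXk : X (T i) ω ≤ k := by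
    rw [← hTcard i]
    exact Finset.card_filter_le _ _
  have hint : ((cl i).vars ∩ M).card = X (T i) ω := by
    have hEq : (cl i).vars ∩ M
        = ((T i).filter (fun u => ω u = true)).map (Function.Embedding.subtype _) := by
      ext v
      simp only [Finset.mem_inter, Finset.mem_map, Finset.mem_filter,
        Function.Embedding.coe_subtype]
      constructor
      · rintro ⟨hv1, hv2⟩
        obtain ⟨hvV, hωv⟩ := (hMmem v).mp hv2
        exact ⟨⟨v, hvV⟩, ⟨(hTmem i ⟨v, hvV⟩).mpr hv1, hωv⟩, rfl⟩
      · rintro ⟨u, ⟨hu1, hu2⟩, rfl⟩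
        exact ⟨(hTmem i u).mp hu1, (hMmem u.1).mpr ⟨u.2, hu2⟩⟩
    rw [hEq, Finset.card_map]
    rfl
  have hdiff : ((cl i).vars \ M).card = k - X (T i) ω := by
    have hEq : (cl i).vars \ M
        = ((T i).filter (fun u => ¬ ω u = true)).map (Function.Embedding.subtype _) := by
      ext v
      simp only [Finset.mem_sdiff, Finset.mem_map, Finset.mem_filter,
        Function.Embedding.coe_subtype]
      constructor
      · rintro ⟨hv1, hv2⟩
        have hvV : v ∈ V' := hmemV' i v hv1
        refine ⟨⟨v, hvV⟩, ⟨(hTmem i ⟨v, hvV⟩).mpr hv1, ?_⟩, rfl⟩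
        intro hc
        exact hv2 ((hMmem v).mpr ⟨hvV, hc⟩)
      · rintro ⟨u, ⟨hu1, hu2⟩, rfl⟩
        refine ⟨(hTmem i u).mp hu1, fun hc => ?_⟩
        obtain ⟨h, hωv⟩ := (hMmem u.1).mp hc
        exact hu2 hωv
    rw [hEq, Finset.card_map]
    have hadd := Finset.card_filter_add_card_filter_not
      (s := T i) (p := fun u => ω u = true)
    rw [hTcard i] at hadd
    have : X (T i) ω = ((T i).filter (fun u => ω u = true)).card := rfl
    omega
  constructor
  · rw [hint]; exact hXi.1
  · rw [hdiff]; omega
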